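/- Let ψ ∈ C⁴(ℝ) be 1-periodic and even, and let Λ be the triangular lattice with nearest-neighbour bond set B. Suppose there exists y : Λ → ℝ and λ > 0 such that Σ_{b∈B} ψ''(Dy_b)(Dv_b)² ≥ λ Σ_{b∈B}(Dv_b)² for all finitely supported v : Λ → ℝ, and suppose dist(Dy_b, ℤ) → 0 as dist(b, 0) → ∞. Then ψ''(0) ≥ λ. Consequently the homogeneous state y ≡ 0 is strongly stable: Σ_{b∈B} ψ''(0)(Dv_b)² ≥ λ Σ_{b∈B}(Dv_b)² for all such v. -/

import Mathlib

noncomputable section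
open Real

abbrev E2 := EuclideanSpace ℝ (Fin 2)

/-- Triangular lattice basis vectors. -/
def la1 : E2 := !₂[1, 0]
def la2 : E2 := !₂[1/2, Real.sqrt 3 / 2]

/-- The triangular lattice Λ = (a₁+a₂)/3 + ℤa₁ + ℤa₂. -/
def TriLat : Set E2 :=
  {x | ∃ m n : ℤ, x = (3 : ℝ)⁻¹ • (la1 + la2) + m • la1 + n • la2}

/-- Nearest-neighbour bonds of the triangular lattice. -/
def Bonds : Set (E2 × E2) :=
  {p | p.1 ∈ TriLat ∧ p.2 ∈ TriLat ∧ ‖p.2 - p.1‖ = 1}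

lemma abs_coord_le (x : E2) (i : Fin 2) : |x i| ≤ ‖x‖ := by
  rw [EuclideanSpace.norm_eq, ← Real.sqrt_sq_eq_abs]
  apply Real.sqrt_le_sqrt
  have := Finset.single_le_sum (f := fun j => ‖x j‖ ^ 2)
    (fun j _ => by positivity) (Finset.mem_univ i)
  simpa [Real.norm_eq_abs, sq_abs] using this

lemma norm_la1 : ‖la1‖ = 1 := by
  rw [EuclideanSpace.norm_eq]
  simp [Fin.sum_univ_two, la1]

lemma latpt_apply (m n : ℤ) (i : Fin 2) :
    ((3:ℝ)⁻¹ • (la1 + la2) + m • la1 + n • la2) i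
      = (3:ℝ)⁻¹ * (la1 i + la2 i) + m * la1 i + n * la2 i := by
  simp [PiLp.add_apply, PiLp.smul_apply, smul_eq_mul]; ring

lemma latpt_apply0 (m n : ℤ) :
    ((3:ℝ)⁻¹ • (la1 + la2) + m • la1 + n • la2) 0 = 1/2 + m + n/2 := by
  rw [latpt_apply]
  show (3:ℝ)⁻¹ * ((1:ℝ) + 1/2) + m * 1 + n * (1/2) = _
  ring

lemma latpt_apply1 (m n : ℤ) :
    ((3:ℝ)⁻¹ • (la1 + la2) + m • la1 + n • la2) 1
      = Real.sqrt 3 / 6 + n * (Real.sqrt 3 / 2) := by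
  rw [latpt_apply]
  show (3:ℝ)⁻¹ * ((0:ℝ) + Real.sqrt 3 / 2) + m * 0 + n * (Real.sqrt 3 / 2) = _
  ring

lemma finite_inter_ball (x : E2) (r : ℝ) :
    (TriLat ∩ Metric.closedBall x r).Finite := by
  set C : ℝ := ‖x‖ + |r| with hCdef
  have hC0 : 0 ≤ C := by positivity
  set K : ℤ := ⌈3 * (C + 1)⌉ with hKdef
  have hKc : (3 * (C + 1) : ℝ) ≤ (K : ℝ) := Int.le_ceil _
  have hs1 : (1:ℝ) ≤ Real.sqrt 3 := by
    rw [show (1:ℝ) = Real.sqrt 1 by simp]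
    exact Real.sqrt_le_sqrt (by norm_num)
  have hs2 : Real.sqrt 3 ≤ 2 := by
    rw [show (2:ℝ) = Real.sqrt 4 by rw [show (4:ℝ) = 2^2 by norm_num, Real.sqrt_sq]; norm_num]
    exact Real.sqrt_le_sqrt (by norm_num)
  apply Set.Finite.subset
    (Set.Finite.image (fun p : ℤ × ℤ => (3:ℝ)⁻¹ • (la1 + la2) + p.1 • la1 + p.2 • la2)
      ((Set.finite_Icc (-K) K).prod (Set.finite_Icc (-K) K)))
  rintro η ⟨⟨m, n, rfl⟩, hball⟩
  have hη : ‖(3:ℝ)⁻¹ • (la1 + la2) + m • la1 + n • la2‖ ≤ C := by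
    have h1 := Metric.mem_closedBall.mp hball
    rw [dist_eq_norm] at h1
    have h2 := norm_add_le ((3:ℝ)⁻¹ • (la1 + la2) + m • la1 + n • la2 - x) x
    rw [sub_add_cancel] at h2
    have h3 : r ≤ |r| := le_abs_self r
    rw [hCdef]; linarith
  have h1 := (abs_coord_le _ 1).trans hη
  rw [latpt_apply1] at h1
  rw [abs_le] at h1
  set s : ℝ := Real.sqrt 3
  have hn2 : |(n:ℝ)| * (s/2) ≤ C + s/6 := by
    rw [← abs_of_pos (show (0:ℝ) < s/2 by linarith), ← abs_mul, abs_le]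
    constructor <;> nlinarith [h1.1, h1.2]
  have hn : |(n:ℝ)| ≤ 3 * (C + 1) := by
    nlinarith [abs_nonneg (n:ℝ)]
  have h0 := (abs_coord_le _ 0).trans hη
  rw [latpt_apply0, abs_le] at h0
  have hnab := abs_le.mp hn
  have hm : |(m:ℝ)| ≤ 3 * (C + 1) := by
    rw [abs_le]; constructor <;> [linarith [h0.1]; linarith [h0.2]]
  have hmab := abs_le.mp hm
  refine ⟨(m, n), ⟨Set.mem_Icc.mpr ⟨?_, ?_⟩, Set.mem_Icc.mpr ⟨?_, ?_⟩⟩, rfl⟩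
  · have : ((-K : ℤ) : ℝ) ≤ (m:ℝ) := by push_cast; linarith [hmab.1]
    exact_mod_cast this
  · have : ((m:ℤ) : ℝ) ≤ (K:ℝ) := by linarith [hmab.2]
    exact_mod_cast this
  · have : ((-K : ℤ) : ℝ) ≤ (n:ℝ) := by push_cast; linarith [hnab.1]
    exact_mod_cast this
  · have : ((n:ℤ) : ℝ) ≤ (K:ℝ) := by linarith [hnab.2]
    exact_mod_cast this

/-- Stability of the homogeneous lattice: if ψ ∈ C⁴ is 1-periodic and even, a state y
is strongly stable with constant λ, and Dy_b approaches ℤ at infinity, then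
ψ''(0) ≥ λ, and hence y ≡ 0 is strongly stable with the same constant. -/
theorem stmt7 (ψ : ℝ → ℝ) (hψ : ContDiff ℝ 4 ψ)
    (hper : ∀ t : ℝ, ψ (t + 1) = ψ t) (heven : ∀ t : ℝ, ψ (-t) = ψ t)
    (y : E2 → ℝ) (lam : ℝ) (hlam : 0 < lam)
    (hstab : ∀ v : E2 → ℝ, (Function.support v).Finite →
      lam * ∑' b : Bonds, (v (b : E2 × E2).2 - v (b : E2 × E2).1) ^ 2 ≤
      ∑' b : Bonds, iteratedDeriv 2 ψ (y (b : E2 × E2).2 - y (b : E2 × E2).1) *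
        (v (b : E2 × E2).2 - v (b : E2 × E2).1) ^ 2)
    (hdecay : ∀ ε : ℝ, 0 < ε → ∃ R : ℝ, ∀ b ∈ Bonds, R ≤ ‖b.1‖ →
      ∃ k : ℤ, |y b.2 - y b.1 - k| < ε) :
    lam ≤ iteratedDeriv 2 ψ 0 ∧
    ∀ v : E2 → ℝ, (Function.support v).Finite →
      lam * ∑' b : Bonds, (v (b : E2 × E2).2 - v (b : E2 × E2).1) ^ 2 ≤
      iteratedDeriv 2 ψ 0 * ∑' b : Bonds, (v (b : E2 × E2).2 - v (b : E2 × E2).1) ^ 2 := by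
  have hper2 : ∀ (t : ℝ) (k : ℤ), iteratedDeriv 2 ψ (t - k) = iteratedDeriv 2 ψ t := by
    have h1 : (fun z : ℝ => ψ (z + 1)) = ψ := funext hper
    have hp : Function.Periodic (iteratedDeriv 2 ψ) 1 := by
      intro t
      have h2 := congrFun (iteratedDeriv_comp_add_const 2 ψ 1) t
      rw [h1] at h2
      exact h2.symm
    intro t k
    simpa using hp.sub_int_mul_eq (x := t) k
  have hcont : ContinuousAt (iteratedDeriv 2 ψ) 0 :=
    (hψ.continuous_iteratedDeriv 2 (by norm_num)).continuousAt
  have key : ∀ δ : ℝ, 0 < δ → lam ≤ iteratedDeriv 2 ψ 0 + δ := by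
    intro δ hδ
    classical
    obtain ⟨ε, hε, hball⟩ := Metric.continuousAt_iff.mp hcont δ hδ
    obtain ⟨R, hR⟩ := hdecay ε hε
    set m₀ : ℤ := (⌈R⌉₊ : ℤ) + 1 with hm₀
    set ξ : E2 := (3:ℝ)⁻¹ • (la1 + la2) + m₀ • la1 + (0:ℤ) • la2 with hξ
    have hξLat : ξ ∈ TriLat := ⟨m₀, 0, rfl⟩
    have hξ0 : ξ 0 = (⌈R⌉₊ : ℝ) + 3/2 := by
      rw [hξ, latpt_apply0]; push_cast [hm₀]; ring
    have hceil : R ≤ (⌈R⌉₊ : ℝ) := Nat.le_ceil R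
    have hceil0 : (0:ℝ) ≤ (⌈R⌉₊ : ℝ) := by positivity
    have hξnorm : R + 1 ≤ ‖ξ‖ := by
      have h1 := abs_coord_le ξ 0
      rw [hξ0, abs_of_nonneg (by linarith)] at h1
      linarith
    set v : E2 → ℝ := fun x => if x = ξ then 1 else 0 with hv
    have hvsupp : (Function.support v).Finite := by
      apply Set.Finite.subset (Set.finite_singleton ξ)
      intro x hx
      by_contra h
      exact hx (if_neg h)
    set F : Bonds → ℝ := fun b => (v (b : E2 × E2).2 - v (b : E2 × E2).1) ^ 2 with hF
    set G : Bonds → ℝ := fun b =>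
      iteratedDeriv 2 ψ (y (b : E2 × E2).2 - y (b : E2 × E2).1) *
        (v (b : E2 × E2).2 - v (b : E2 × E2).1) ^ 2 with hG
    have hSfin : {b : Bonds | (b : E2 × E2).1 = ξ ∨ (b : E2 × E2).2 = ξ}.Finite := by
      have hA : (insert ξ (TriLat ∩ Metric.closedBall ξ 1)).Finite :=
        (finite_inter_ball ξ 1).insert ξ
      have hS : {p : E2 × E2 | p ∈ Bonds ∧ (p.1 = ξ ∨ p.2 = ξ)}.Finite := by
        apply Set.Finite.subset (hA.prod hA)
        rintro ⟨p1, p2⟩ ⟨⟨hp1, hp2, hd⟩, hinc⟩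
        rcases hinc with h | h
        · refine ⟨Or.inl h, Or.inr ⟨hp2, ?_⟩⟩
          rw [Metric.mem_closedBall, dist_eq_norm, ← h]
          exact le_of_eq hd
        · refine ⟨Or.inr ⟨hp1, ?_⟩, Or.inl h⟩
          rw [Metric.mem_closedBall, dist_eq_norm, ← h, ← norm_neg]
          simp only [neg_sub]
          exact le_of_eq hd
      have heq : {b : Bonds | (b : E2 × E2).1 = ξ ∨ (b : E2 × E2).2 = ξ}
          = Subtype.val ⁻¹' {p : E2 × E2 | p ∈ Bonds ∧ (p.1 = ξ ∨ p.2 = ξ)} := by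
        ext b
        simp only [Set.mem_setOf_eq, Set.mem_preimage]
        exact ⟨fun h => ⟨b.2, h⟩, fun h => h.2⟩
      rw [heq]
      exact hS.preimage (Subtype.val_injective.injOn)
    have hFzero : ∀ b : Bonds, ¬((b : E2 × E2).1 = ξ ∨ (b : E2 × E2).2 = ξ) → F b = 0 := by
      intro b hb
      push_neg at hb
      simp [hF, hv, hb.1, hb.2]
    have hFs : Summable F :=
      summable_of_ne_finset_zero (s := hSfin.toFinset)
        (fun b hb => hFzero b (by simpa using hb))
    have hGzero : ∀ b : Bonds, ¬((b : E2 × E2).1 = ξ ∨ (b : E2 × E2).2 = ξ) → G b = 0 := by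
      intro b hb
      have h1 := hFzero b hb
      simp only [hF] at h1
      simp only [hG, h1, mul_zero]
    have hGs : Summable G :=
      summable_of_ne_finset_zero (s := hSfin.toFinset)
        (fun b hb => hGzero b (by simpa using hb))
    have hpt : ∀ b : Bonds, G b ≤ (iteratedDeriv 2 ψ 0 + δ) * F b := by
      intro b
      by_cases hb : (b : E2 × E2).1 = ξ ∨ (b : E2 × E2).2 = ξ
      · have hRb : R ≤ ‖(b : E2 × E2).1‖ := by
          rcases hb with h | h
          · rw [h]; linarith
          · have hd : ‖(b : E2 × E2).2 - (b : E2 × E2).1‖ = 1 := b.2.2.2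
            have h4 := norm_sub_norm_le ((b : E2 × E2).2) ((b : E2 × E2).1)
            rw [hd] at h4
            have h5 : R + 1 ≤ ‖(b : E2 × E2).2‖ := by rw [h]; exact hξnorm
            linarith
        obtain ⟨k, hk⟩ := hR (b : E2 × E2) b.2 hRb
        have h5 : iteratedDeriv 2 ψ (y (b : E2 × E2).2 - y (b : E2 × E2).1)
            ≤ iteratedDeriv 2 ψ 0 + δ := by
          have h6 := hball (x := y (b : E2 × E2).2 - y (b : E2 × E2).1 - k)
            (by rw [Real.dist_eq, sub_zero]; exact hk)
          rw [Real.dist_eq, hper2 _ k] at h6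
          have := (abs_lt.mp h6).2
          linarith
        simp only [hG, hF]
        exact mul_le_mul_of_nonneg_right h5 (sq_nonneg _)
      · rw [hGzero b hb, hFzero b hb, mul_zero]
    have hstab' := hstab v hvsupp
    have hlat2 : ξ + la1 ∈ TriLat := by
      refine ⟨m₀ + 1, 0, ?_⟩
      have hsm : ((m₀ + 1 : ℤ)) • la1 = m₀ • la1 + la1 := by rw [add_smul, one_smul]
      rw [hξ, hsm]
      abel
    have hb₀ : ((ξ, ξ + la1) : E2 × E2) ∈ Bonds :=
      ⟨hξLat, hlat2, by rw [add_sub_cancel_left]; exact norm_la1⟩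
    set b₀ : Bonds := ⟨(ξ, ξ + la1), hb₀⟩ with hb₀def
    have hla1ne : ξ + la1 ≠ ξ := by
      intro h
      have h7 : la1 = 0 := by
        have h8 := congrArg (· - ξ) h
        simpa using h8
      have h9 := norm_la1
      rw [h7, norm_zero] at h9
      norm_num at h9
    have hFb₀ : F b₀ = 1 := by
      simp [hF, hv, hb₀def, hla1ne]
    have hT1 : 1 ≤ ∑' b : Bonds, F b := by
      rw [← hFb₀]
      exact Summable.le_tsum hFs b₀ (fun b' _ => sq_nonneg _)
    have hGle : ∑' b : Bonds, G b ≤ (iteratedDeriv 2 ψ 0 + δ) * ∑' b : Bonds, F b := by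
      rw [← tsum_mul_left]
      exact Summable.tsum_le_tsum hpt hGs (hFs.mul_left _)
    have hchain : lam * ∑' b : Bonds, F b ≤ (iteratedDeriv 2 ψ 0 + δ) * ∑' b : Bonds, F b :=
      le_trans hstab' hGle
    have hT0 : 0 < ∑' b : Bonds, F b := lt_of_lt_of_le one_pos hT1
    exact le_of_mul_le_mul_right hchain hT0
  have h1 : lam ≤ iteratedDeriv 2 ψ 0 := le_of_forall_pos_le_add key
  refine ⟨h1, fun v hv => ?_⟩
  have hT : 0 ≤ ∑' b : Bonds, (v (b : E2 × E2).2 - v (b : E2 × E2).1) ^ 2 :=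
    tsum_nonneg (fun b : Bonds => sq_nonneg (v (b : E2 × E2).2 - v (b : E2 × E2).1))
  exact mul_le_mul_of_nonneg_right h1 hT
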